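/- Let P be a set of n ≥ 3 points in R^3 with no three points collinear and no four points concyclic, and fix A ∈ P. Then the number of distinct angle values ∠XYZ taken over ordered triples of distinct points of P in which A appears as one of the two endpoints (i.e., angles of the form ∠ABC or ∠BCA with B, C ∈ P \ {A}) is at least sqrt((n-2)/3). -/

import Mathlib

open EuclideanGeometry RealInnerProductSpace

local notation "V3" => EuclideanSpace ℝ (Fin 3)

private lemma angle_eq_vec (A B C : V3) :
    ∠ A B C = InnerProductGeometry.angle (A - B) (C - B) := by
  rw [EuclideanGeometry.angle, vsub_eq_sub, vsub_eq_sub]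

private lemma sinlaw (A B C : V3) (h : C ≠ B) :
    Real.sin (∠ A B C) * dist A B = Real.sin (∠ A C B) * dist A C := by
  set u := A - B with hu
  set v := C - B with hv
  have hv0 : v ≠ 0 := sub_ne_zero.mpr h
  have hAC : A - C = u - v := by rw [hu, hv]; abel
  have hBC : B - C = -v := by rw [hv]; abel
  have e1 := InnerProductGeometry.sin_angle_mul_norm_mul_norm u v
  have e2 := InnerProductGeometry.sin_angle_mul_norm_mul_norm (u - v) (-v)
  have key : (inner ℝ (u - v) (u - v) * inner ℝ (-v) (-v)
        - inner ℝ (u - v) (-v) * inner ℝ (u - v) (-v) : ℝ)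
      = (inner ℝ u u * inner ℝ v v - inner ℝ u v * inner ℝ u v : ℝ) := by
    simp only [inner_sub_left, inner_sub_right, inner_neg_left, inner_neg_right]
    rw [real_inner_comm v u]; ring
  rw [key] at e2
  have e3 : Real.sin (InnerProductGeometry.angle u v) * (‖u‖ * ‖v‖)
      = Real.sin (InnerProductGeometry.angle (u - v) (-v)) * (‖u - v‖ * ‖-v‖) := by
    rw [e1, e2]
  rw [norm_neg] at e3
  have h1 : ∠ A B C = InnerProductGeometry.angle u v := angle_eq_vec A B C
  have h2 : ∠ A C B = InnerProductGeometry.angle (u - v) (-v) := by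
    rw [angle_eq_vec A C B, hAC, hBC]
  rw [h1, h2, dist_eq_norm, dist_eq_norm, ← hu, hAC]
  apply mul_right_cancel₀ (norm_ne_zero_iff.mpr hv0)
  calc Real.sin (InnerProductGeometry.angle u v) * ‖u‖ * ‖v‖
      = Real.sin (InnerProductGeometry.angle u v) * (‖u‖ * ‖v‖) := by ring
    _ = Real.sin (InnerProductGeometry.angle (u - v) (-v)) * (‖u - v‖ * ‖v‖) := e3
    _ = Real.sin (InnerProductGeometry.angle (u - v) (-v)) * ‖u - v‖ * ‖v‖ := by ring

private lemma ne_of_not_collinear {A B C : V3} (h : ¬ Collinear ℝ ({A, B, C} : Set V3)) :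
    A ≠ B ∧ A ≠ C ∧ B ≠ C := by
  refine ⟨?_, ?_, ?_⟩ <;> rintro rfl <;> apply h
  · exact (collinear_pair ℝ A C).subset (by simp [Set.insert_subset_iff])
  · exact (collinear_pair ℝ A B).subset (by simp [Set.insert_subset_iff])
  · exact (collinear_pair ℝ A B).subset (by simp [Set.insert_subset_iff])

private lemma not_collinear_perm {A B C : V3} (h : ¬ Collinear ℝ ({A, B, C} : Set V3)) :
    ¬ Collinear ℝ ({A, C, B} : Set V3) := by
  intro hc; apply h
  have : ({A, C, B} : Set V3) = {A, B, C} := by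
    simp [Set.insert_comm, Set.pair_comm]
  rwa [this] at hc

private lemma dists_eq (A B C₁ C₂ : V3)
    (h1 : ¬ Collinear ℝ ({A, B, C₁} : Set V3)) (h2 : ¬ Collinear ℝ ({A, B, C₂} : Set V3))
    (hα : ∠ A B C₁ = ∠ A B C₂) (hβ : ∠ A C₁ B = ∠ A C₂ B) :
    dist A C₁ = dist A C₂ ∧ dist B C₁ = dist B C₂ := by
  obtain ⟨hAB, hAC₁, hBC₁⟩ := ne_of_not_collinear h1
  obtain ⟨_, hAC₂, hBC₂⟩ := ne_of_not_collinear h2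
  have hs1 : Real.sin (∠ A C₁ B) ≠ 0 :=
    sin_ne_zero_of_not_collinear (not_collinear_perm h1)
  have hs2 : Real.sin (∠ A C₂ B) ≠ 0 :=
    sin_ne_zero_of_not_collinear (not_collinear_perm h2)
  have e1 := sinlaw A B C₁ (Ne.symm hBC₁)
  have e2 := sinlaw A B C₂ (Ne.symm hBC₂)
  have hd1 : dist A C₁ = dist A C₂ := by
    have : Real.sin (∠ A C₁ B) * dist A C₁ = Real.sin (∠ A C₂ B) * dist A C₂ := by
      rw [← e1, ← e2, hα]
    rw [hβ] at this
    exact mul_left_cancel₀ hs2 this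
  refine ⟨hd1, ?_⟩
  -- angle at A
  have t1 := angle_add_angle_add_angle_eq_pi (p₁ := A) C₁ (Ne.symm hAB)
  have t2 := angle_add_angle_add_angle_eq_pi (p₁ := A) C₂ (Ne.symm hAB)
  have hγ : ∠ C₁ A B = ∠ C₂ A B := by
    have h1' : ∠ C₁ A B = Real.pi - ∠ A B C₁ - ∠ B C₁ A := by linarith
    have h2' : ∠ C₂ A B = Real.pi - ∠ A B C₂ - ∠ B C₂ A := by linarith
    rw [h1', h2', hα, angle_comm B C₁ A, angle_comm B C₂ A, hβ]
  have e1' := sinlaw B A C₁ hAC₁.symm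
  have e2' := sinlaw B A C₂ hAC₂.symm
  -- e1' : sin (∠ B A C₁) * dist B A = sin (∠ B C₁ A) * dist B C₁
  rw [angle_comm B C₁ A, angle_comm A C₁ B] at e1'
  rw [angle_comm B C₂ A, angle_comm A C₂ B] at e2'
  rw [angle_comm B A C₁] at e1'
  rw [angle_comm B A C₂] at e2'
  have : Real.sin (∠ B C₁ A) * dist B C₁ = Real.sin (∠ B C₂ A) * dist B C₂ := by
    rw [← e1', ← e2', hγ]
  rw [angle_comm B C₁ A, angle_comm B C₂ A, hβ] at this
  exact mul_left_cancel₀ hs2 this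

private lemma concyclic_of_two_dists {A B : V3} (hAB : A ≠ B) (s : Set V3) (rA rB : ℝ)
    (h : ∀ p ∈ s, dist p A = rA ∧ dist p B = rB) : Concyclic s := by
  constructor
  · exact ⟨A, rA, fun p hp => (h p hp).1⟩
  · have hle : vectorSpan ℝ s ≤ ((ℝ ∙ (B - A))ᗮ : Submodule ℝ V3) := by
      rw [vectorSpan_def, Submodule.span_le]
      rintro x ⟨p, hp, q, hq, rfl⟩
      rw [SetLike.mem_coe, Submodule.mem_orthogonal_singleton_iff_inner_left]
      have := inner_vsub_vsub_of_dist_eq_of_dist_eq (c₁ := A) (c₂ := B) (p₁ := q) (p₂ := p)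
        (((h q hq).1).trans ((h p hp).1).symm) (((h q hq).2).trans ((h p hp).2).symm)
      rw [real_inner_comm]; simpa [vsub_eq_sub, mul_comm] using this
    have h1 : Module.finrank ℝ (ℝ ∙ (B - A)) = 1 :=
      finrank_span_singleton (sub_ne_zero.mpr (Ne.symm hAB))
    have h2 := Submodule.finrank_add_finrank_orthogonal (K := ((ℝ ∙ (B - A)) : Submodule ℝ V3))
    rw [h1, finrank_euclideanSpace_fin] at h2
    have hfr : Module.finrank ℝ ((ℝ ∙ (B - A))ᗮ : Submodule ℝ V3) = 2 := by omega
    have hmono : Module.rank ℝ (vectorSpan ℝ s)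
        ≤ Module.rank ℝ ((ℝ ∙ (B - A))ᗮ : Submodule ℝ V3) := Submodule.rank_mono hle
    have hrW : Module.rank ℝ ((ℝ ∙ (B - A))ᗮ : Submodule ℝ V3) = 2 := by
      rw [← Module.finrank_eq_rank, hfr]; norm_num
    unfold Coplanar
    rw [← hrW]
    exact hmono

theorem stmt_7 [DecidableEq (EuclideanSpace ℝ (Fin 3))]
    (n : ℕ) (hn : 3 ≤ n) (P : Finset (EuclideanSpace ℝ (Fin 3))) (hcard : P.card = n)
    (hline : ∀ a ∈ P, ∀ b ∈ P, ∀ c ∈ P, a ≠ b → a ≠ c → b ≠ c →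
      ¬ Collinear ℝ ({a, b, c} : Set (EuclideanSpace ℝ (Fin 3))))
    (hcircle : ∀ s : Finset (EuclideanSpace ℝ (Fin 3)), s ⊆ P → s.card = 4 →
      ¬ Concyclic (s : Set (EuclideanSpace ℝ (Fin 3))))
    (A : EuclideanSpace ℝ (Fin 3)) (hA : A ∈ P) :
    Real.sqrt (((n : ℝ) - 2) / 3) ≤
      (((((P \ {A}) ×ˢ (P \ {A})).filter (fun pr => pr.1 ≠ pr.2)).image
          (fun pr => ∠ A pr.1 pr.2)).card : ℝ) := by
  classical
  set T := ((((P \ {A}) ×ˢ (P \ {A})).filter (fun pr => pr.1 ≠ pr.2)).image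
      (fun pr => ∠ A pr.1 pr.2)) with hT
  -- pick B
  have hPA : (P.erase A).Nonempty := by
    rw [← Finset.card_pos, Finset.card_erase_of_mem hA, hcard]; omega
  obtain ⟨B, hB⟩ := hPA
  have hBP : B ∈ P := Finset.mem_of_mem_erase hB
  have hBA : B ≠ A := Finset.ne_of_mem_erase hB
  set s : Finset (EuclideanSpace ℝ (Fin 3)) := (P.erase A).erase B with hs
  have hscard : s.card = n - 2 := by
    rw [hs, Finset.card_erase_of_mem hB, Finset.card_erase_of_mem hA, hcard]; omega
  have hsub : ∀ C ∈ s, C ∈ P ∧ C ≠ A ∧ C ≠ B := fun C hC =>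
    ⟨Finset.mem_of_mem_erase (Finset.mem_of_mem_erase hC),
     Finset.ne_of_mem_erase (Finset.mem_of_mem_erase hC), Finset.ne_of_mem_erase hC⟩
  set f : EuclideanSpace ℝ (Fin 3) → ℝ × ℝ := fun C => (∠ A B C, ∠ A C B) with hf
  -- angles of points in s land in T
  have hmemT : ∀ C ∈ s, (∠ A B C) ∈ T ∧ (∠ A C B) ∈ T := by
    intro C hC
    obtain ⟨hCP, hCA, hCB⟩ := hsub C hC
    constructor
    · refine Finset.mem_image.2 ⟨(B, C), ?_, rfl⟩
      refine Finset.mem_filter.2 ⟨Finset.mem_product.2 ⟨?_, ?_⟩, hCB.symm⟩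
      · simp [Finset.mem_sdiff, hBP, hBA]
      · simp [Finset.mem_sdiff, hCP, hCA]
    · refine Finset.mem_image.2 ⟨(C, B), ?_, rfl⟩
      refine Finset.mem_filter.2 ⟨Finset.mem_product.2 ⟨?_, ?_⟩, hCB⟩
      · simp [Finset.mem_sdiff, hCP, hCA]
      · simp [Finset.mem_sdiff, hBP, hBA]
  -- fibers of f on s have size ≤ 3
  have hfiber : ∀ a ∈ s.image f, (s.filter (fun x => f x = a)).card ≤ 3 := by
    intro a _
    by_contra hgt
    push_neg at hgt
    obtain ⟨t, htsub, htcard⟩ := Finset.exists_subset_card_eq (show 4 ≤ _ from hgt)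
    have htP : t ⊆ P := fun x hx => (hsub x (Finset.mem_of_mem_filter x (htsub hx))).1
    refine hcircle t htP htcard ?_
    obtain ⟨c₀, hc₀⟩ := Finset.card_pos.1 (by omega : 0 < t.card)
    have hprop : ∀ C ∈ t, C ∈ P ∧ C ≠ A ∧ C ≠ B ∧ f C = a := by
      intro C hC
      have h' := htsub hC
      have h'' := Finset.mem_filter.1 h'
      exact ⟨(hsub C h''.1).1, (hsub C h''.1).2.1, (hsub C h''.1).2.2, h''.2⟩
    apply concyclic_of_two_dists (Ne.symm hBA) (t : Set (EuclideanSpace ℝ (Fin 3)))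
      (dist c₀ A) (dist c₀ B)
    intro p hp
    rw [Finset.mem_coe] at hp
    obtain ⟨hpP, hpA, hpB⟩ := hsub p (Finset.mem_of_mem_filter p (htsub hp))
    obtain ⟨hcP, hcA, hcB⟩ := hsub c₀ (Finset.mem_of_mem_filter c₀ (htsub hc₀))
    have hfp : f p = f c₀ := by rw [(hprop p hp).2.2.2, (hprop c₀ hc₀).2.2.2]
    have hα : ∠ A B p = ∠ A B c₀ := congrArg Prod.fst hfp
    have hβ : ∠ A p B = ∠ A c₀ B := congrArg Prod.snd hfp
    have hnc1 : ¬ Collinear ℝ ({A, B, p} : Set (EuclideanSpace ℝ (Fin 3))) :=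
      hline A hA B hBP p hpP (Ne.symm hBA) (Ne.symm hpA) (Ne.symm hpB)
    have hnc2 : ¬ Collinear ℝ ({A, B, c₀} : Set (EuclideanSpace ℝ (Fin 3))) :=
      hline A hA B hBP c₀ hcP (Ne.symm hBA) (Ne.symm hcA) (Ne.symm hcB)
    obtain ⟨d1, d2⟩ := dists_eq A B p c₀ hnc1 hnc2 hα hβ
    rw [dist_comm p A, dist_comm p B, d1, d2, dist_comm A c₀, dist_comm B c₀]
    exact ⟨rfl, rfl⟩
  have hcount : s.card ≤ 3 * (s.image f).card := Finset.card_le_mul_card_image s 3 hfiber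
  have himsub : s.image f ⊆ T ×ˢ T := by
    intro a ha
    obtain ⟨C, hC, rfl⟩ := Finset.mem_image.1 ha
    exact Finset.mem_product.2 ⟨(hmemT C hC).1, (hmemT C hC).2⟩
  have him : (s.image f).card ≤ T.card * T.card := by
    have := Finset.card_le_card himsub
    rwa [Finset.card_product] at this
  have hmain : n - 2 ≤ 3 * (T.card * T.card) := by
    calc n - 2 = s.card := hscard.symm
      _ ≤ 3 * (s.image f).card := hcount
      _ ≤ 3 * (T.card * T.card) := by exact Nat.mul_le_mul_left 3 him
  -- real arithmetic
  have hR : ((n : ℝ) - 2) / 3 ≤ ((T.card : ℝ)) ^ 2 := by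
    have h2n : 2 ≤ n := by omega
    have : ((n - 2 : ℕ) : ℝ) ≤ ((3 * (T.card * T.card) : ℕ) : ℝ) := Nat.cast_le.2 hmain
    rw [Nat.cast_sub h2n] at this
    push_cast at this
    nlinarith
  calc Real.sqrt (((n : ℝ) - 2) / 3) ≤ Real.sqrt (((T.card : ℝ)) ^ 2) := Real.sqrt_le_sqrt hR
    _ = (T.card : ℝ) := Real.sqrt_sq (by positivity)
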